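/- Let q = (2e+1)·t with integers e ≥ 0 and t ≥ 2, and let C ⊆ Z_q^2 be a perfect e-code. Then C is standard: there exists i ∈ {1,2} such that c + (2e+1)·e_i ∈ C for every c ∈ C, where e_1 = (1,0) and e_2 = (0,1) in Z_q^2. -/

import Mathlib

/-- Lee distance on `ZMod q`. -/
def leeDist {q : ℕ} (x y : ZMod q) : ℕ := min (x - y).val (q - (x - y).val)

/-- Maximum (Chebyshev) distance on `(ZMod q)^n`. -/
def maxDist {q n : ℕ} (x y : Fin n → ZMod q) : ℕ :=
  Finset.univ.sup fun i => leeDist (x i) (y i)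

/-- `C` is a perfect `e`-code: every point is within distance `e` of exactly one codeword. -/
def IsPerfectCode {q n : ℕ} (e : ℕ) (C : Set (Fin n → ZMod q)) : Prop :=
  ∀ x : Fin n → ZMod q, ∃! c, c ∈ C ∧ maxDist x c ≤ e


section Lemmas
variable {q e : ℕ} [NeZero q]

lemma natval_cast (a : ZMod q) : ((a.val : ℕ) : ZMod q) = a := by
  simp [ZMod.natCast_val]

omit [NeZero q] in
lemma intcast_inj {k k' : ℤ} (h : (k : ZMod q) = (k' : ZMod q)) (hk : (k - k').natAbs < q) :
    k = k' := by
  have h0 : ((k - k' : ℤ) : ZMod q) = 0 := by push_cast; rw [h]; ring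
  rw [ZMod.intCast_zmod_eq_zero_iff_dvd] at h0
  have := Int.eq_zero_of_dvd_of_natAbs_lt_natAbs h0 (by simpa using hk)
  omega

lemma lee_le_iff {m : ℕ} (hm : m < q) (a b : ZMod q) :
    leeDist a b ≤ m ↔ ∃ k : ℤ, k.natAbs ≤ m ∧ a = b + (k : ZMod q) := by
  have hv := ZMod.val_lt (a - b)
  constructor
  · intro h
    simp only [leeDist] at h
    by_cases h' : (a - b).val ≤ m
    · refine ⟨((a-b).val : ℤ), by omega, ?_⟩
      push_cast
      rw [natval_cast]; ring
    · refine ⟨-(q - (a-b).val : ℕ), by omega, ?_⟩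
      push_cast [Nat.cast_sub hv.le]
      rw [natval_cast, ZMod.natCast_self]; ring
  · rintro ⟨k, hk, rfl⟩
    simp only [leeDist]
    rw [show b + (k:ZMod q) - b = (k:ZMod q) from by ring]
    rcases le_or_gt 0 k with hk0 | hk0
    · have : ((k : ZMod q)).val = k.toNat := by
        rw [show (k : ZMod q) = ((k.toNat : ℕ) : ZMod q) by
          calc (k : ZMod q) = ((k.toNat : ℤ) : ZMod q) := by rw [Int.toNat_of_nonneg hk0]
          _ = ((k.toNat : ℕ) : ZMod q) := by push_cast; ring]
        rw [ZMod.val_natCast, Nat.mod_eq_of_lt (by omega)]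
      omega
    · have : ((k : ZMod q)).val = (k + q).toNat := by
        rw [show (k : ZMod q) = (((k + q).toNat : ℕ) : ZMod q) by
          calc (k : ZMod q) = (((k + q : ℤ)) : ZMod q) := by push_cast; simp [ZMod.natCast_self]
          _ = (((k + q).toNat : ℤ) : ZMod q) := by rw [Int.toNat_of_nonneg (by omega)]
          _ = (((k + q).toNat : ℕ) : ZMod q) := by push_cast; ring]
        rw [ZMod.val_natCast, Nat.mod_eq_of_lt (by omega)]
      omega

omit [NeZero q] in
lemma lee_self (a : ZMod q) : leeDist a a = 0 := by
  simp [leeDist]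


def pt2 {q : ℕ} (i j : Fin 2) (a b : ZMod q) : Fin 2 → ZMod q := fun k => if k = i then a else b


lemma funext2 {i j : Fin 2} (hij : i ≠ j) {x y : Fin 2 → ZMod q}
    (h1 : x i = y i) (h2 : x j = y j) : x = y := by
  funext k
  fin_cases i <;> fin_cases j <;> fin_cases k <;> simp_all

lemma maxDist_pt {i j : Fin 2} (hij : i ≠ j) (a b : ZMod q) (c : Fin 2 → ZMod q) :
    maxDist (pt2 i j a b) c ≤ e ↔ leeDist a (c i) ≤ e ∧ leeDist b (c j) ≤ e := by
  simp only [maxDist, Finset.sup_le_iff, Finset.mem_univ, forall_const, Fin.forall_fin_two]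
  unfold pt2
  fin_cases i <;> fin_cases j <;> simp_all <;> tauto

lemma perfect_pt {C : Set (Fin 2 → ZMod q)} (hC : IsPerfectCode e C) {i j : Fin 2}
    (hij : i ≠ j) (a b : ZMod q) :
    ∃! c, c ∈ C ∧ leeDist a (c i) ≤ e ∧ leeDist b (c j) ≤ e := by
  simpa only [maxDist_pt hij] using hC (pt2 i j a b)


end Lemmas

section Main
variable {q e : ℕ} [NeZero q] {C : Set (Fin 2 → ZMod q)} {i j : Fin 2}

lemma packing (hC : IsPerfectCode e C) (hij : i ≠ j) (h2s : 2*(2*e+1) ≤ q)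
    {c c' : Fin 2 → ZMod q} (hc : c ∈ C) (hc' : c' ∈ C)
    {ki kj : ℤ} (hki : ki.natAbs ≤ 2*e) (hkj : kj.natAbs ≤ 2*e)
    (hi : c' i = c i + (ki : ZMod q)) (hj : c' j = c j + (kj : ZMod q)) : c = c' := by
  obtain ⟨u, hu1, hu2⟩ : ∃ u : ℤ, u.natAbs ≤ e ∧ (ki - u).natAbs ≤ e := ⟨ki/2, by omega, by omega⟩
  obtain ⟨w, hw1, hw2⟩ : ∃ w : ℤ, w.natAbs ≤ e ∧ (kj - w).natAbs ≤ e := ⟨kj/2, by omega, by omega⟩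
  obtain ⟨g, -, hg⟩ := perfect_pt hC hij (c i + (u : ZMod q)) (c j + (w : ZMod q))
  have e1 : c = g := hg c ⟨hc, by
      rw [lee_le_iff (by omega)]; exact ⟨u, hu1, rfl⟩, by
      rw [lee_le_iff (by omega)]; exact ⟨w, hw1, rfl⟩⟩
  have e2 : c' = g := hg c' ⟨hc', by
      rw [lee_le_iff (by omega)]; exact ⟨u - ki, by omega, by rw [hi]; push_cast; ring⟩, by
      rw [lee_le_iff (by omega)]; exact ⟨w - kj, by omega, by rw [hj]; push_cast; ring⟩⟩
  rw [e1, e2]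

lemma next_pos (hC : IsPerfectCode e C) (hij : i ≠ j) (h2s : 2*(2*e+1) ≤ q)
    {c : Fin 2 → ZMod q} (hc : c ∈ C) {a : ZMod q} (ha : leeDist a (c i) ≤ e) :
    ∃ c', c' ∈ C ∧ leeDist a (c' i) ≤ e ∧ c' j = c j + (((2*e+1) : ℤ) : ZMod q) := by
  obtain ⟨c', ⟨hc'C, hci, hcj⟩, -⟩ := perfect_pt hC hij a (c j + (((e+1) : ℤ) : ZMod q))
  refine ⟨c', hc'C, hci, ?_⟩
  rw [lee_le_iff (by omega)] at hcj
  obtain ⟨k, hk, hkeq⟩ := hcj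
  have hj' : c' j = c j + (((e+1) - k : ℤ) : ZMod q) := by
    push_cast at hkeq ⊢; linear_combination -hkeq
  by_cases hr : ((e+1 : ℤ) - k).natAbs ≤ 2*e
  · exfalso
    rw [lee_le_iff (by omega)] at ha hci
    obtain ⟨v, hv1, hv2⟩ := ha
    obtain ⟨v', hv1', hv2'⟩ := hci
    have hieq : c' i = c i + ((v - v' : ℤ) : ZMod q) := by
      push_cast at hv2 hv2' ⊢; linear_combination hv2 - hv2'
    obtain rfl := packing hC hij h2s hc hc'C (by omega : (v - v').natAbs ≤ 2*e) hr hieq hj'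
    have h0 : (((e+1) - k : ℤ) : ZMod q) = ((0:ℤ) : ZMod q) := by
      push_cast at hj' ⊢; linear_combination -hj'
    have := intcast_inj h0 (by omega)
    omega
  · have heq : (e+1 : ℤ) - k = ((2*e+1) : ℤ) := by omega
    rw [hj', heq]

lemma next_neg (hC : IsPerfectCode e C) (hij : i ≠ j) (h2s : 2*(2*e+1) ≤ q)
    {c : Fin 2 → ZMod q} (hc : c ∈ C) {a : ZMod q} (ha : leeDist a (c i) ≤ e) :
    ∃ c', c' ∈ C ∧ leeDist a (c' i) ≤ e ∧ c' j = c j + ((-(2*e+1) : ℤ) : ZMod q) := by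
  obtain ⟨c', ⟨hc'C, hci, hcj⟩, -⟩ := perfect_pt hC hij a (c j + ((-(e+1) : ℤ) : ZMod q))
  refine ⟨c', hc'C, hci, ?_⟩
  rw [lee_le_iff (by omega)] at hcj
  obtain ⟨k, hk, hkeq⟩ := hcj
  have hj' : c' j = c j + ((-(e+1) - k : ℤ) : ZMod q) := by
    push_cast at hkeq ⊢; linear_combination -hkeq
  by_cases hr : (-(e+1 : ℤ) - k).natAbs ≤ 2*e
  · exfalso
    rw [lee_le_iff (by omega)] at ha hci
    obtain ⟨v, hv1, hv2⟩ := ha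
    obtain ⟨v', hv1', hv2'⟩ := hci
    have hieq : c' i = c i + ((v - v' : ℤ) : ZMod q) := by
      push_cast at hv2 hv2' ⊢; linear_combination hv2 - hv2'
    obtain rfl := packing hC hij h2s hc hc'C (by omega : (v - v').natAbs ≤ 2*e) hr hieq hj'
    have h0 : ((-(e+1) - k : ℤ) : ZMod q) = ((0:ℤ) : ZMod q) := by
      push_cast at hj' ⊢; linear_combination -hj'
    have := intcast_inj h0 (by omega)
    omega
  · have heq : -(e+1 : ℤ) - k = (-(2*e+1) : ℤ) := by omega
    rw [hj', heq]

lemma column_cong (hC : IsPerfectCode e C) (hij : i ≠ j) (h2s : 2*(2*e+1) ≤ q)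
    {a : ZMod q} {c c' : Fin 2 → ZMod q} (hc : c ∈ C) (hc' : c' ∈ C)
    (h1 : leeDist a (c i) ≤ e) (h2 : leeDist a (c' i) ≤ e) :
    ∃ m : ℤ, c' j = c j + ((m * (2*e+1) : ℤ) : ZMod q) := by
  have hoff : c' j = c j + (((c' j - c j).val : ℤ) : ZMod q) := by
    push_cast; rw [natval_cast]; ring
  suffices key : ∀ n : ℕ, ∀ k : ℤ, k.natAbs = n → ∀ c c' : Fin 2 → ZMod q, c ∈ C → c' ∈ C →
      leeDist a (c i) ≤ e → leeDist a (c' i) ≤ e → c' j = c j + (k : ZMod q) →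
      ∃ m : ℤ, c' j = c j + ((m * (2*e+1) : ℤ) : ZMod q) by
    exact key _ _ rfl c c' hc hc' h1 h2 hoff
  intro n
  induction n using Nat.strong_induction_on with
  | _ n IH =>
  rintro k rfl c c' hc hc' h1 h2 hoff
  by_cases hk : k.natAbs ≤ e
  · rw [lee_le_iff (by omega)] at h1 h2
    obtain ⟨v, hv1, hv2⟩ := h1
    obtain ⟨v', hv1', hv2'⟩ := h2
    have hieq : c' i = c i + ((v - v' : ℤ) : ZMod q) := by
      push_cast at hv2 hv2' ⊢; linear_combination hv2 - hv2'
    obtain rfl := packing hC hij h2s hc hc' (by omega : (v - v').natAbs ≤ 2*e) (by omega) hieq hoff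
    exact ⟨0, by push_cast; ring⟩
  · rcases le_or_gt 0 k with hk0 | hk0
    · obtain ⟨c'', hc''C, hc''i, hc''j⟩ := next_pos hC hij h2s hc h1
      have hoff' : c' j = c'' j + ((k - (2*e+1) : ℤ) : ZMod q) := by
        rw [hc''j]
        push_cast at hoff ⊢; linear_combination hoff
      obtain ⟨m, hm⟩ := IH (k - (2*e+1)).natAbs (by omega) _ rfl c'' c' hc''C hc' hc''i h2 hoff'
      refine ⟨m + 1, by rw [hm, hc''j]; push_cast; ring⟩
    · obtain ⟨c'', hc''C, hc''i, hc''j⟩ := next_neg hC hij h2s hc h1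
      have hoff' : c' j = c'' j + ((k + (2*e+1) : ℤ) : ZMod q) := by
        rw [hc''j]
        push_cast at hoff ⊢; linear_combination hoff
      obtain ⟨m, hm⟩ := IH (k + (2*e+1)).natAbs (by omega) _ rfl c'' c' hc''C hc' hc''i h2 hoff'
      refine ⟨m - 1, by rw [hm, hc''j]; push_cast; ring⟩

lemma shift (hC : IsPerfectCode e C) (hij : i ≠ j) (h2s : 2*(2*e+1) ≤ q)
    (hdvd : (2*e+1) ∣ q)
    (Hcong : ∀ c ∈ C, ∀ c' ∈ C, ∃ m : ℤ, c j = c' j + ((m*(2*e+1) : ℤ) : ZMod q))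
    {c : Fin 2 → ZMod q} (hc : c ∈ C) :
    ∃ c', c' ∈ C ∧ c' i = c i + (((2*e+1 : ℕ)) : ZMod q) ∧ c' j = c j := by
  obtain ⟨c', ⟨hc'C, hci, hcj⟩, -⟩ := perfect_pt hC hij (c i + (((e+1) : ℤ) : ZMod q)) (c j)
  rw [lee_le_iff (by omega)] at hci hcj
  obtain ⟨k, hk, hkeq⟩ := hci
  obtain ⟨u, hu, hueq⟩ := hcj
  obtain ⟨m, hm⟩ := Hcong c' hc'C c hc
  -- c j = c' j + u  and  c' j = c j + m*(2e+1)  ⇒  (m*(2e+1) + u : ZMod q) = 0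
  have h0 : ((m*(2*e+1) + u : ℤ) : ZMod q) = 0 := by
    push_cast at hm hueq ⊢; linear_combination -hm - hueq
  rw [ZMod.intCast_zmod_eq_zero_iff_dvd] at h0
  obtain ⟨t', ht'⟩ := hdvd
  obtain ⟨z, hz⟩ := h0
  have hsu : ((2*e+1 : ℕ) : ℤ) ∣ u := ⟨t'*z - m, by rw [ht'] at hz; push_cast at hz ⊢; linarith⟩
  have hu0 : u = 0 :=
    Int.eq_zero_of_dvd_of_natAbs_lt_natAbs hsu (by omega)
  have hj0 : c' j = c j := by rw [hueq, hu0]; push_cast; ring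
  -- now the i-offset r = (e+1) - k ∈ [1, 2e+1]
  have hieq : c' i = c i + (((e+1) - k : ℤ) : ZMod q) := by
    push_cast at hkeq ⊢; linear_combination -hkeq
  by_cases hr : ((e+1 : ℤ) - k).natAbs ≤ 2*e
  · exfalso
    have hjeq : c' j = c j + ((0 : ℤ) : ZMod q) := by rw [hj0]; push_cast; ring
    obtain rfl := packing hC hij h2s hc hc'C hr (by omega) hieq hjeq
    have h0' : (((e+1) - k : ℤ) : ZMod q) = ((0:ℤ) : ZMod q) := by
      push_cast at hieq ⊢; linear_combination -hieq
    have := intcast_inj h0' (by omega)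
    omega
  · have heq : (e+1 : ℤ) - k = ((2*e+1 : ℕ) : ℤ) := by push_cast; omega
    refine ⟨c', hc'C, ?_, hj0⟩
    rw [hieq, heq]
    norm_cast

lemma fault (hC : IsPerfectCode e C) (hij : i ≠ j) (h2s : 2*(2*e+1) ≤ q)
    (hdvd : (2*e+1) ∣ q) {c₀ c₁ : Fin 2 → ZMod q} (h0 : c₀ ∈ C) (h1 : c₁ ∈ C)
    (hne : ¬ ∃ k : ℤ, c₀ j = c₁ j + ((k*(2*e+1) : ℤ) : ZMod q)) :
    ∀ d ∈ C, ∀ d' ∈ C, ∃ k : ℤ, d i = d' i + ((k*(2*e+1) : ℤ) : ZMod q) := by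
  classical
  have hne' : ¬ ∃ k : ℤ, c₁ j = c₀ j + ((k*(2*e+1) : ℤ) : ZMod q) := by
    rintro ⟨k, hk⟩
    exact hne ⟨-k, by rw [hk]; push_cast; ring⟩
  have hex : ∃ x : ℕ, ∃ d ∈ C, leeDist (c₀ i + ((x : ℕ) : ZMod q)) (d i) ≤ e ∧
      ¬ ∃ k : ℤ, d j = c₀ j + ((k*(2*e+1) : ℤ) : ZMod q) := by
    refine ⟨(c₁ i - c₀ i).val, c₁, h1, ?_, hne'⟩
    rw [show c₀ i + (((c₁ i - c₀ i).val : ℕ) : ZMod q) = c₁ i by rw [natval_cast]; ring]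
    simp [lee_self]
  obtain ⟨d₁, hd₁C, hd₁cov, hd₁ne⟩ := Nat.find_spec hex
  have hxpos : Nat.find hex ≠ 0 := by
    intro hz
    apply hd₁ne
    rw [hz] at hd₁cov
    simp only [Nat.cast_zero, add_zero] at hd₁cov
    have := column_cong hC hij h2s h0 hd₁C (by simp [lee_self] : leeDist (c₀ i) (c₀ i) ≤ e) hd₁cov
    obtain ⟨m, hm⟩ := this
    exact ⟨m, hm⟩
  set a : ZMod q := c₀ i + ((Nat.find hex : ℕ) : ZMod q) with ha_def
  clear_value a
  -- every codeword covering column a has i-coordinate a + e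
  have edge : ∀ g ∈ C, leeDist a (g i) ≤ e → g i = a + ((e : ℤ) : ZMod q) := by
    intro g hg hga
    have hgne : ¬ ∃ k : ℤ, g j = c₀ j + ((k*(2*e+1) : ℤ) : ZMod q) := by
      rintro ⟨k, hk⟩
      obtain ⟨m, hm⟩ := column_cong hC hij h2s hg hd₁C hga hd₁cov
      exact hd₁ne ⟨k + m, by rw [hm, hk]; push_cast; ring⟩
    have hnc : ¬ leeDist (c₀ i + (((Nat.find hex - 1 : ℕ)) : ZMod q)) (g i) ≤ e := by
      intro hcov
      exact Nat.find_min hex (m := Nat.find hex - 1) (by omega) ⟨g, hg, hcov, hgne⟩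
    rw [lee_le_iff (by omega)] at hga
    obtain ⟨w, hw1, hw2⟩ := hga
    have hfs : (((Nat.find hex - 1 : ℕ)) : ZMod q) = ((Nat.find hex : ℕ) : ZMod q) - 1 := by
      rw [Nat.cast_sub (by omega : 1 ≤ Nat.find hex)]; simp
    have hcol : c₀ i + (((Nat.find hex - 1 : ℕ)) : ZMod q) = g i + ((w - 1 : ℤ) : ZMod q) := by
      rw [hfs, ha_def] at *
      push_cast at hw2 ⊢
      linear_combination hw2
    have hw1' : ¬ (w - 1).natAbs ≤ e := by
      intro h'
      exact hnc (by rw [lee_le_iff (by omega)]; exact ⟨w - 1, h', hcol⟩)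
    have hwe : w = -(e : ℤ) := by omega
    rw [hw2, hwe]; push_cast; ring
  -- induction along strips
  have induct : ∀ m : ℕ, ∀ h' ∈ C, leeDist (a + ((m*(2*e+1) : ℤ) : ZMod q)) (h' i) ≤ e →
      h' i = a + ((m*(2*e+1) + e : ℤ) : ZMod q) := by
    intro m
    induction m with
    | zero =>
      intro h' hh hcov
      simp only [Nat.cast_zero, zero_mul, Int.cast_zero, add_zero, zero_add] at hcov ⊢
      exact edge h' hh hcov
    | succ m IH =>
      set A : ZMod q := a + ((m*(2*e+1) : ℤ) : ZMod q) with hA_def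
      clear_value A
      have strip : ∀ h' ∈ C, leeDist (A + ((2*e : ℤ) : ZMod q)) (h' i) ≤ e →
          h' i = A + ((e : ℤ) : ZMod q) := by
        intro h' hh hcov
        obtain ⟨g, ⟨hgC, hgi, hgj⟩, -⟩ := perfect_pt hC hij A (h' j)
        have hgi' : g i = A + ((e : ℤ) : ZMod q) := by
          have := IH g hgC hgi
          rw [this, hA_def]; push_cast; ring
        obtain ⟨g', -, hu'⟩ := perfect_pt hC hij (A + ((2*e : ℤ) : ZMod q)) (h' j)
        have e1 : h' = g' := hu' h' ⟨hh, hcov, by simp [lee_self]⟩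
        have e2 : g = g' := hu' g ⟨hgC, by
            rw [lee_le_iff (by omega)]
            exact ⟨(e : ℤ), by omega, by rw [hgi']; push_cast; ring⟩, hgj⟩
        rw [e1, ← e2, hgi']
      intro h' hh hcov
      have hcov' : leeDist (A + ((2*e+1 : ℤ) : ZMod q)) (h' i) ≤ e := by
        have : A + ((2*e+1 : ℤ) : ZMod q) = a + (((m+1 : ℕ)*(2*e+1) : ℤ) : ZMod q) := by
          rw [hA_def]; push_cast; ring
        rw [this]; exact hcov
      rw [lee_le_iff (by omega)] at hcov'
      obtain ⟨w, hw1, hw2⟩ := hcov'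
      by_cases hcase : (w - 1).natAbs ≤ e
      · exfalso
        have hcv : leeDist (A + ((2*e : ℤ) : ZMod q)) (h' i) ≤ e := by
          rw [lee_le_iff (by omega)]
          exact ⟨w - 1, hcase, by push_cast at hw2 ⊢; linear_combination hw2⟩
        have hst := strip h' hh hcv
        rw [hst] at hw2
        have h0' : ((2*e+1 : ℤ) : ZMod q) = ((e + w : ℤ) : ZMod q) := by
          push_cast at hw2 ⊢; linear_combination hw2
        have := intcast_inj h0' (by omega)
        omega
      · have hwe : w = -(e : ℤ) := by omega
        rw [hwe, hA_def] at hw2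
        push_cast at hw2 ⊢
        linear_combination -hw2
  -- every codeword lies on some strip
  have main : ∀ d ∈ C, ∃ m : ℕ, d i = a + ((m*(2*e+1) + e : ℤ) : ZMod q) := by
    intro d hd
    set x : ℕ := (d i - a).val with hx_def
    have hx : d i = a + ((x : ℤ) : ZMod q) := by
      push_cast; rw [hx_def, natval_cast]; ring
    clear_value x
    refine ⟨(x + e) / (2*e+1), ?_⟩
    set m : ℕ := (x + e) / (2*e+1) with hm_def
    have hdm := Nat.div_add_mod (x + e) (2*e+1)
    have hmd := Nat.mod_lt (x + e) (show 0 < 2*e+1 by omega)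
    rw [← hm_def] at hdm
    clear_value m
    have hcov : leeDist (a + ((m*(2*e+1) : ℤ) : ZMod q)) (d i) ≤ e := by
      rw [lee_le_iff (by omega)]
      refine ⟨((((2*e+1)*m : ℕ)) : ℤ) - x, by omega, by rw [hx]; push_cast; ring⟩
    exact induct m d hd hcov
  intro d hd d' hd'
  obtain ⟨m, hm⟩ := main d hd
  obtain ⟨m', hm'⟩ := main d' hd'
  exact ⟨(m : ℤ) - m', by rw [hm, hm']; push_cast; ring⟩

end Main


/-- Every two-dimensional perfect code in the maximum metric is standard. -/
theorem stmt2 (e t q : ℕ) (ht : 2 ≤ t) (hq : q = (2 * e + 1) * t)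
    (C : Set (Fin 2 → ZMod q)) (hC : IsPerfectCode e C) :
    ∃ i : Fin 2, ∀ c ∈ C, c + Pi.single i ((2 * e + 1 : ℕ) : ZMod q) ∈ C := by
  haveI : NeZero q := ⟨by
    have : 0 < (2*e+1)*t := Nat.mul_pos (by omega) (by omega)
    omega⟩
  have h2s : 2*(2*e+1) ≤ q := by
    rw [hq]
    calc 2*(2*e+1) = (2*e+1)*2 := by ring
    _ ≤ (2*e+1)*t := Nat.mul_le_mul_left _ ht
  have hdvd : (2*e+1) ∣ q := ⟨t, hq⟩
  by_cases hcong : ∀ c ∈ C, ∀ c' ∈ C, ∃ m : ℤ, c 1 = c' 1 + ((m*(2*e+1) : ℤ) : ZMod q)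
  · refine ⟨0, fun c hc => ?_⟩
    obtain ⟨c', hc'C, hi, hj⟩ := shift hC (show (0:Fin 2) ≠ 1 by decide) h2s hdvd hcong hc
    have hceq : c + Pi.single (0 : Fin 2) (((2*e+1 : ℕ)) : ZMod q) = c' := by
      refine funext2 (show (0:Fin 2) ≠ 1 by decide) ?_ ?_
      · simpa using hi.symm
      · simpa [Pi.single_eq_of_ne (show (1:Fin 2) ≠ 0 by decide)] using hj.symm
    rw [show (2 * e + 1 : ℕ) = 2*e+1 from rfl] at *
    rw [hceq]; exact hc'C
  · push_neg at hcong
    obtain ⟨c₀, h0, c₁, h1, hne⟩ := hcong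
    have hf := fault hC (show (0:Fin 2) ≠ 1 by decide) h2s hdvd h0 h1
      (by rintro ⟨k, hk⟩; exact hne k hk)
    refine ⟨1, fun c hc => ?_⟩
    obtain ⟨c', hc'C, hi, hj⟩ := shift hC (show (1:Fin 2) ≠ 0 by decide) h2s hdvd hf hc
    have hceq : c + Pi.single (1 : Fin 2) (((2*e+1 : ℕ)) : ZMod q) = c' := by
      refine funext2 (show (1:Fin 2) ≠ 0 by decide) ?_ ?_
      · simpa using hi.symm
      · simpa [Pi.single_eq_of_ne (show (0:Fin 2) ≠ 1 by decide)] using hj.symm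
    rw [hceq]; exact hc'C
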